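/- If h, c, ψ are continuous functions of exponential order on [0,∞) satisfying the renewal equation h(t) = c(t) + ∫₀^t ψ(t−x) h(x) dx, and the Neumann series Σ_{m≥1} ψ_m converges locally uniformly (where ψ₁ = ψ and ψ_{m+1} = ψ ∗ ψ_m), then h(t) = c(t) + Σ_{m=1}^∞ (ψ_m ∗ c)(t). -/

import Mathlib

open MeasureTheory Set intervalIntegral Filter
open scoped Topology

/-- The iterated self-convolutions of ψ : `convPow ψ m` is ψ_{m+1}, so
`convPow ψ 0 = ψ₁ = ψ` and ψ_{m+1} = ψ ∗ ψ_m. -/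
noncomputable def convPow (ψ : ℝ → ℝ) : ℕ → (ℝ → ℝ)
  | 0 => ψ
  | m + 1 => fun t => ∫ x in (0:ℝ)..t, ψ (t - x) * convPow ψ m x

noncomputable def lconv (f g : ℝ → ℝ) (t : ℝ) : ℝ := ∫ x in (0:ℝ)..t, f (t - x) * g x

lemma lconv_comm (f g : ℝ → ℝ) (t : ℝ) : lconv f g t = lconv g f t := by
  unfold lconv
  have h := intervalIntegral.integral_comp_sub_left
    (a := (0:ℝ)) (b := t) (fun x => g (t - x) * f x) t
  simp only [sub_sub_cancel, sub_zero, sub_self] at h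
  rw [← h]
  apply intervalIntegral.integral_congr
  intro x _
  simp [mul_comm]

lemma lconv_continuous {f g : ℝ → ℝ} (hf : Continuous f) (hg : Continuous g) :
    Continuous (lconv f g) := by
  have hF : Continuous (Function.uncurry fun t x => f (t - x) * g x) := by
    apply Continuous.mul
    · exact hf.comp (continuous_fst.sub continuous_snd)
    · exact hg.comp continuous_snd
  exact intervalIntegral.continuous_parametric_intervalIntegral_of_continuous hF continuous_id

lemma triangle_swap (F : ℝ → ℝ → ℝ) (hF : Continuous fun p : ℝ × ℝ => F p.1 p.2)
    (t : ℝ) (ht : 0 ≤ t) :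
    (∫ x in (0:ℝ)..t, ∫ y in (0:ℝ)..(t - x), F x y)
      = ∫ y in (0:ℝ)..t, ∫ x in (0:ℝ)..(t - y), F x y := by
  set S : Set (ℝ × ℝ) := {p | 0 < p.1 ∧ 0 < p.2 ∧ p.1 + p.2 ≤ t} with hS
  have hSm : MeasurableSet S := by
    have : S = {p : ℝ × ℝ | 0 < p.1} ∩ ({p | 0 < p.2} ∩ {p | p.1 + p.2 ≤ t}) := by
      ext p; simp [hS, and_assoc]
    rw [this]
    exact (measurableSet_lt measurable_const measurable_fst).inter
      ((measurableSet_lt measurable_const measurable_snd).inter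
        (measurableSet_le (measurable_fst.add measurable_snd) measurable_const))
  set G : ℝ × ℝ → ℝ := S.indicator (fun p => F p.1 p.2) with hG
  have hGint : Integrable G := by
    rw [hG, integrable_indicator_iff hSm]
    have hsub : S ⊆ Icc ((0:ℝ), (0:ℝ)) (t, t) := by
      rintro ⟨x, y⟩ ⟨h1, h2, h3⟩
      constructor
      · exact ⟨le_of_lt h1, le_of_lt h2⟩
      · exact ⟨by linarith, by linarith⟩
    exact (hF.continuousOn.integrableOn_compact isCompact_Icc).mono_set hsub
  have hGprod : Integrable (Function.uncurry fun x y => G (x, y)) (volume.prod volume) := by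
    rw [← Measure.volume_eq_prod]; exact hGint
  have inner_eq : ∀ x : ℝ, (∫ y, G (x, y))
      = (Ioc 0 t).indicator (fun x' => ∫ y in (0:ℝ)..(t - x'), F x' y) x := by
    intro x
    by_cases hx : x ∈ Ioc 0 t
    · have hfun : (fun y => G (x, y)) = (Ioc 0 (t - x)).indicator (fun y => F x y) := by
        ext y
        by_cases hmem : (x, y) ∈ S
        · rw [hG, indicator_of_mem hmem,
            indicator_of_mem (show y ∈ Ioc 0 (t - x) from ⟨hmem.2.1, by linarith [hmem.2.2]⟩)]
        · rw [hG, indicator_of_notMem hmem, indicator_of_notMem]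
          intro hy
          exact hmem ⟨hx.1, hy.1, by linarith [hy.2]⟩
      rw [hfun, MeasureTheory.integral_indicator measurableSet_Ioc, indicator_of_mem hx,
        intervalIntegral.integral_of_le (by linarith [hx.2] : (0:ℝ) ≤ t - x)]
    · have hfun : (fun y => G (x, y)) = fun _ => 0 := by
        ext y
        rw [hG, indicator_of_notMem]
        rintro ⟨h1, h2, h3⟩
        exact hx ⟨h1, by linarith⟩
      rw [hfun, indicator_of_notMem hx, MeasureTheory.integral_zero]
  have inner_eq' : ∀ y : ℝ, (∫ x, G (x, y))
      = (Ioc 0 t).indicator (fun y' => ∫ x in (0:ℝ)..(t - y'), F x y') y := by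
    intro y
    by_cases hy : y ∈ Ioc 0 t
    · have hfun : (fun x => G (x, y)) = (Ioc 0 (t - y)).indicator (fun x => F x y) := by
        ext x
        by_cases hmem : (x, y) ∈ S
        · rw [hG, indicator_of_mem hmem,
            indicator_of_mem (show x ∈ Ioc 0 (t - y) from ⟨hmem.1, by linarith [hmem.2.2]⟩)]
        · rw [hG, indicator_of_notMem hmem, indicator_of_notMem]
          intro hx
          exact hmem ⟨hx.1, hy.1, by linarith [hx.2]⟩
      rw [hfun, MeasureTheory.integral_indicator measurableSet_Ioc, indicator_of_mem hy,
        intervalIntegral.integral_of_le (by linarith [hy.2] : (0:ℝ) ≤ t - y)]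
    · have hfun : (fun x => G (x, y)) = fun _ => 0 := by
        ext x
        rw [hG, indicator_of_notMem]
        rintro ⟨h1, h2, h3⟩
        exact hy ⟨h2, by linarith⟩
      rw [hfun, indicator_of_notMem hy, MeasureTheory.integral_zero]
  have swap := MeasureTheory.integral_integral_swap hGprod
  calc (∫ x in (0:ℝ)..t, ∫ y in (0:ℝ)..(t - x), F x y)
      = ∫ x, (Ioc 0 t).indicator (fun x' => ∫ y in (0:ℝ)..(t - x'), F x' y) x := by
        rw [MeasureTheory.integral_indicator measurableSet_Ioc,
          intervalIntegral.integral_of_le ht]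
    _ = ∫ x, ∫ y, G (x, y) := by
        congr 1; exact funext fun x => (inner_eq x).symm
    _ = ∫ y, ∫ x, G (x, y) := swap
    _ = ∫ y, (Ioc 0 t).indicator (fun y' => ∫ x in (0:ℝ)..(t - y'), F x y') y := by
        congr 1; exact funext inner_eq'
    _ = ∫ y in (0:ℝ)..t, ∫ x in (0:ℝ)..(t - y), F x y := by
        rw [MeasureTheory.integral_indicator measurableSet_Ioc,
          intervalIntegral.integral_of_le ht]

lemma lconv_swap {f g u : ℝ → ℝ} (hf : Continuous f) (hg : Continuous g)
    (hu : Continuous u) (t : ℝ) (ht : 0 ≤ t) :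
    lconv (lconv f g) u t = lconv (lconv f u) g t := by
  have expand : ∀ v w : ℝ → ℝ,
      lconv (lconv f v) w t = ∫ x in (0:ℝ)..t, ∫ y in (0:ℝ)..(t - x),
        f (t - x - y) * v y * w x := by
    intro v w
    unfold lconv
    apply intervalIntegral.integral_congr
    intro x _
    simp only
    rw [← intervalIntegral.integral_mul_const]
  rw [expand g u, expand u g]
  have hswap := triangle_swap (fun x y => f (t - x - y) * g y * u x)
    (by
      apply Continuous.mul
      apply Continuous.mul
      · exact hf.comp (((continuous_const.sub continuous_fst).sub continuous_snd))
      · exact hg.comp continuous_snd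
      · exact hu.comp continuous_fst) t ht
  rw [hswap]
  apply intervalIntegral.integral_congr
  intro y _
  apply intervalIntegral.integral_congr
  intro x _
  simp only
  ring_nf

lemma lconv_assoc {f g u : ℝ → ℝ} (hf : Continuous f) (hg : Continuous g)
    (hu : Continuous u) (t : ℝ) (ht : 0 ≤ t) :
    lconv f (lconv g u) t = lconv (lconv f g) u t := by
  have h1 : lconv f (lconv g u) t = lconv (lconv g u) f t := lconv_comm _ _ _
  have h2 : lconv (lconv g u) f t = lconv (lconv g f) u t := lconv_swap hg hu hf t ht
  have h3 : lconv g f = lconv f g := funext fun s => lconv_comm g f s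
  rw [h1, h2, h3]

lemma lconv_bound {f g : ℝ → ℝ} (hf : Continuous f) (hg : Continuous g)
    {A B γ : ℝ} (hγ : 0 < γ) (hA : 0 ≤ A) (hB : 0 ≤ B) (m : ℕ)
    (hfb : ∀ x ≥ (0:ℝ), |f x| ≤ A * Real.exp (x / γ))
    (hgb : ∀ x ≥ (0:ℝ), |g x| ≤ B * x ^ m / m.factorial * Real.exp (x / γ))
    {t : ℝ} (ht : 0 ≤ t) :
    |lconv f g t| ≤ A * B * t ^ (m + 1) / (m + 1).factorial * Real.exp (t / γ) := by
  have hint : IntervalIntegrable (fun x => |f (t - x) * g x|) volume 0 t :=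
    (((hf.comp (continuous_const.sub continuous_id)).mul hg).abs).intervalIntegrable 0 t
  have hBd : IntervalIntegrable
      (fun x => A * B * Real.exp (t / γ) / m.factorial * x ^ m) volume 0 t :=
    (continuous_const.mul (continuous_pow m)).intervalIntegrable 0 t
  have step1 : |lconv f g t| ≤ ∫ x in (0:ℝ)..t, |f (t - x) * g x| :=
    intervalIntegral.abs_integral_le_integral_abs ht
  have step2 : (∫ x in (0:ℝ)..t, |f (t - x) * g x|)
      ≤ ∫ x in (0:ℝ)..t, A * B * Real.exp (t / γ) / m.factorial * x ^ m := by
    apply intervalIntegral.integral_mono_on ht hint hBd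
    intro x hx
    have hx0 : (0:ℝ) ≤ x := hx.1
    have hxt : x ≤ t := hx.2
    have h1 : |f (t - x)| ≤ A * Real.exp ((t - x) / γ) := hfb _ (by linarith)
    have h2 : |g x| ≤ B * x ^ m / m.factorial * Real.exp (x / γ) := hgb _ hx0
    have h3 : |f (t - x) * g x| ≤ (A * Real.exp ((t - x) / γ)) *
        (B * x ^ m / m.factorial * Real.exp (x / γ)) := by
      rw [abs_mul]
      exact mul_le_mul h1 h2 (abs_nonneg _) (le_trans (abs_nonneg _) h1)
    calc |f (t - x) * g x| ≤ (A * Real.exp ((t - x) / γ)) *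
        (B * x ^ m / m.factorial * Real.exp (x / γ)) := h3
      _ = A * B * Real.exp (t / γ) / m.factorial * x ^ m := by
          rw [show (t - x) / γ = t / γ - x / γ by ring, Real.exp_sub]
          have := Real.exp_ne_zero (x / γ)
          field_simp
  have step3 : (∫ x in (0:ℝ)..t, A * B * Real.exp (t / γ) / m.factorial * x ^ m)
      = A * B * t ^ (m + 1) / (m + 1).factorial * Real.exp (t / γ) := by
    rw [intervalIntegral.integral_const_mul, integral_pow]
    rw [Nat.factorial_succ]
    have hm : (m.factorial : ℝ) ≠ 0 := Nat.cast_ne_zero.2 m.factorial_ne_zero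
    have hm1 : ((m:ℝ) + 1) ≠ 0 := by positivity
    push_cast
    field_simp
    ring
  linarith

/-- solution of the renewal equation by a Neumann series:
h(t) = c(t) + Σ_{m≥1} (ψ_m ∗ c)(t). -/
theorem renewal_equation_neumann_series
    (h c ψ : ℝ → ℝ) (hh : Continuous h) (hc : Continuous c) (hψ : Continuous ψ)
    (K γ : ℝ) (hK : 0 < K) (hγ : 0 < γ)
    (hhexp : ∀ t ≥ (0:ℝ), |h t| ≤ K * Real.exp (t / γ))
    (hcexp : ∀ t ≥ (0:ℝ), |c t| ≤ K * Real.exp (t / γ))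
    (hψexp : ∀ t ≥ (0:ℝ), |ψ t| ≤ K * Real.exp (t / γ))
    (hrenewal : ∀ t ≥ (0:ℝ),
      h t = c t + ∫ x in (0:ℝ)..t, ψ (t - x) * h x)
    (hconv : ∀ T > (0:ℝ),
      TendstoUniformlyOn
        (fun N t => ∑ m ∈ Finset.range N, convPow ψ m t)
        (fun t => ∑' m : ℕ, convPow ψ m t) atTop (Icc 0 T)) :
    ∀ t ≥ (0:ℝ),
      h t = c t + ∑' m : ℕ, ∫ x in (0:ℝ)..t, convPow ψ m (t - x) * c x := by
  intro t ht
  have hr' : ∀ x ≥ (0:ℝ), h x = c x + lconv ψ h x := hrenewal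
  have hcontP : ∀ m, Continuous (convPow ψ m) := by
    intro m
    induction m with
    | zero => exact hψ
    | succ n ih => exact lconv_continuous hψ ih
  have hPb : ∀ m, ∀ x ≥ (0:ℝ),
      |convPow ψ m x| ≤ K ^ (m + 1) * x ^ m / m.factorial * Real.exp (x / γ) := by
    intro m
    induction m with
    | zero => intro x hx; simpa [convPow] using hψexp x hx
    | succ n ih =>
      intro x hx
      have hb := lconv_bound hψ (hcontP n) hγ hK.le (pow_pos hK (n + 1)).le n hψexp ih hx
      have heq : convPow ψ (n + 1) x = lconv ψ (convPow ψ n) x := rfl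
      rw [heq]
      calc |lconv ψ (convPow ψ n) x|
          ≤ K * K ^ (n + 1) * x ^ (n + 1) / (n + 1).factorial * Real.exp (x / γ) := hb
        _ = K ^ (n + 1 + 1) * x ^ (n + 1) / (n + 1).factorial * Real.exp (x / γ) := by
            ring
  set a : ℕ → ℝ := fun m => ∫ x in (0:ℝ)..t, convPow ψ m (t - x) * c x with ha
  have haeq : ∀ m, a m = lconv (convPow ψ m) c t := fun m => rfl
  have hab : ∀ m, |a m| ≤ K * Real.exp (t / γ) * ((K * t) ^ (m + 1) / (m + 1).factorial) := by
    intro m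
    have hb := lconv_bound hc (hcontP m) hγ hK.le (pow_pos hK (m + 1)).le m hcexp (hPb m) ht
    calc |a m| = |lconv c (convPow ψ m) t| := by rw [haeq m, lconv_comm]
      _ ≤ K * K ^ (m + 1) * t ^ (m + 1) / (m + 1).factorial * Real.exp (t / γ) := hb
      _ = K * Real.exp (t / γ) * ((K * t) ^ (m + 1) / (m + 1).factorial) := by
          rw [mul_pow]; ring
  have hsum_b : Summable (fun m : ℕ =>
      K * Real.exp (t / γ) * ((K * t) ^ (m + 1) / (m + 1).factorial)) :=
    ((summable_nat_add_iff 1).2 (Real.summable_pow_div_factorial (K * t))).mul_left _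
  have hsa : Summable a :=
    Summable.of_norm_bounded hsum_b (fun m => by rw [Real.norm_eq_abs]; exact hab m)
  have key : ∀ N : ℕ, h t = c t + (∑ m ∈ Finset.range N, a m) + lconv (convPow ψ N) h t := by
    intro N
    induction N with
    | zero =>
      rw [Finset.range_zero, Finset.sum_empty, add_zero]
      exact hr' t ht
    | succ N ih =>
      have hi1 : IntervalIntegrable (fun x => convPow ψ N (t - x) * c x) volume 0 t :=
        (((hcontP N).comp (continuous_const.sub continuous_id)).mul hc).intervalIntegrable 0 t
      have hi2 : IntervalIntegrable (fun x => convPow ψ N (t - x) * lconv ψ h x) volume 0 t :=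
        (((hcontP N).comp (continuous_const.sub continuous_id)).mul
          (lconv_continuous hψ hh)).intervalIntegrable 0 t
      have hexp : lconv (convPow ψ N) h t
          = lconv (convPow ψ N) c t + lconv (convPow ψ (N + 1)) h t := by
        have hcongr : lconv (convPow ψ N) h t
            = ∫ x in (0:ℝ)..t,
                (convPow ψ N (t - x) * c x + convPow ψ N (t - x) * lconv ψ h x) := by
          apply intervalIntegral.integral_congr
          intro x hx
          rw [uIcc_of_le ht] at hx
          simp only
          rw [hr' x hx.1, mul_add]
        rw [hcongr, intervalIntegral.integral_add hi1 hi2]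
        congr 1
        have e1 : (∫ x in (0:ℝ)..t, convPow ψ N (t - x) * lconv ψ h x)
            = lconv (convPow ψ N) (lconv ψ h) t := rfl
        rw [e1, lconv_assoc (hcontP N) hψ hh t ht]
        have e2 : lconv (convPow ψ N) ψ = convPow ψ (N + 1) := by
          funext s; rw [lconv_comm]; rfl
        rw [e2]
      rw [Finset.sum_range_succ]
      have haN : lconv (convPow ψ N) c t = a N := (haeq N).symm
      rw [haN] at hexp
      linarith [ih, hexp]
  have hrem : Tendsto (fun N => lconv (convPow ψ N) h t) atTop (𝓝 0) := by
    apply squeeze_zero_norm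
      (a := fun N : ℕ => K * Real.exp (t / γ) * ((K * t) ^ (N + 1) / (N + 1).factorial))
    · intro N
      have hb := lconv_bound hh (hcontP N) hγ hK.le (pow_pos hK (N + 1)).le N hhexp (hPb N) ht
      rw [Real.norm_eq_abs,
        show lconv (convPow ψ N) h t = lconv h (convPow ψ N) t from lconv_comm _ _ _]
      calc |lconv h (convPow ψ N) t|
          ≤ K * K ^ (N + 1) * t ^ (N + 1) / (N + 1).factorial * Real.exp (t / γ) := hb
        _ = K * Real.exp (t / γ) * ((K * t) ^ (N + 1) / (N + 1).factorial) := by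
            rw [mul_pow]; ring
    · have h0 : Tendsto (fun n : ℕ => (K * t) ^ n / n.factorial) atTop (𝓝 0) :=
        (Real.summable_pow_div_factorial (K * t)).tendsto_atTop_zero
      have h1 : Tendsto (fun N : ℕ => (K * t) ^ (N + 1) / (N + 1).factorial) atTop (𝓝 0) :=
        h0.comp (tendsto_add_atTop_nat 1)
      simpa using h1.const_mul (K * Real.exp (t / γ))
  have hps : Tendsto (fun N => ∑ m ∈ Finset.range N, a m) atTop (𝓝 (h t - c t)) := by
    have heq : (fun N => ∑ m ∈ Finset.range N, a m)
        = fun N => h t - c t - lconv (convPow ψ N) h t :=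
      funext fun N => by linarith [key N]
    rw [heq]
    simpa using tendsto_const_nhds.sub hrem
  have h2 := hsa.hasSum.tendsto_sum_nat
  have h3 : (∑' m, a m) = h t - c t := tendsto_nhds_unique h2 hps
  rw [h3]
  ring
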